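/- arXiv:math/0010062 — 3 statements merged into one kernel-verified Lean document; each statement's English description precedes it below -/
import Mathlib

section
/- Let X ⊆ ℝ be a measurable set such that to each x ∈ X there is associated a sequence D_n(x) of nested intervals converging to x (x ∈ D_{n+1}(x) ⊆ D_n(x) and |D_n(x)| → 0), with the property that for all x₁, x₂ ∈ X and all n, the intervals D_n(x₁) and D_n(x₂) are either equal or disjoint. Let Q_n be measurable subsets of ℝ and set q_n(x) = |Q_n ∩ D_n(x)|/|D_n(x)|. Let Y be the set of all x ∈ X which belong to at most finitely many Q_n. If Σ_n q_n(x) is finite for almost every x ∈ X, then |Y| = |X|. -/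
open Set Filter MeasureTheory Topology
open scoped ENNReal

lemma mtl_interval {u w : ℝ} (huw : u < w) {s : Set ℝ} (h1 : Ioo u w ⊆ s) (h2 : s ⊆ Icc u w) :
    MeasurableSet s ∧ volume s = ENNReal.ofReal (w - u) ∧
      ∀ t : Set ℝ, volume (t ∩ s) = volume (t ∩ Icc u w) := by
  have hpair : volume ({u, w} : Set ℝ) = 0 :=
    (Set.countable_insert.mpr (Set.countable_singleton _)).measure_zero _
  have hdiff : s \ Ioo u w ⊆ ({u, w} : Set ℝ) := by
    intro y hy
    have : y ∈ Icc u w \ Ioo u w := ⟨h2 hy.1, hy.2⟩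
    rwa [Icc_diff_Ioo_same huw.le] at this
  have hsrepr : s = Ioo u w ∪ (s \ Ioo u w) := by
    rw [union_diff_cancel' (fun y hy => hy) h1]
  refine ⟨?_, ?_, ?_⟩
  · rw [hsrepr]
    exact measurableSet_Ioo.union
      ((((Set.finite_singleton w).insert u).subset hdiff).measurableSet)
  · refine le_antisymm ?_ ?_
    · calc volume s ≤ volume (Icc u w) := measure_mono h2
        _ = ENNReal.ofReal (w - u) := Real.volume_Icc
    · calc ENNReal.ofReal (w - u) = volume (Ioo u w) := Real.volume_Ioo.symm
        _ ≤ volume s := measure_mono h1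
  · intro t
    refine le_antisymm (measure_mono (inter_subset_inter_right _ h2)) ?_
    calc volume (t ∩ Icc u w) ≤ volume ((t ∩ s) ∪ ({u, w} : Set ℝ)) := by
          refine measure_mono ?_
          intro y hy
          by_cases hys : y ∈ s
          · exact Or.inl ⟨hy.1, hys⟩
          · right
            have : y ∈ Icc u w \ Ioo u w := ⟨hy.2, fun h => hys (h1 h)⟩
            rwa [Icc_diff_Ioo_same huw.le] at this
      _ ≤ volume (t ∩ s) + volume ({u, w} : Set ℝ) := measure_union_le _ _
      _ = volume (t ∩ s) := by rw [hpair, add_zero]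

lemma mtl_countable {𝒥 : Set (Set ℝ)} (hne : ∀ I ∈ 𝒥, ∃ q : ℚ, (q : ℝ) ∈ I)
    (hdisj : ∀ I ∈ 𝒥, ∀ J ∈ 𝒥, I = J ∨ Disjoint I J) : 𝒥.Countable := by
  choose f hf using hne
  have hinj : Function.Injective (fun I : 𝒥 => f I I.2) := by
    rintro ⟨I, hI⟩ ⟨J, hJ⟩ h
    simp only at h
    have h1 : (f I hI : ℝ) ∈ I := hf I hI
    have h2 : (f I hI : ℝ) ∈ J := h ▸ hf J hJ
    have := hdisj I hI J hJ
    rcases this with h' | h'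
    · exact Subtype.ext h'
    · exact absurd (h'.ne_of_mem h1 h2) (by simp)
  have : Countable 𝒥 := hinj.countable
  exact Set.countable_coe_iff.mp this

/-- The measure-theoretical lemma: if the relative measures `q_n(x)` of `Q_n` in the
nested intervals `D_n(x)` are summable for a.e. `x ∈ X`, then almost every `x ∈ X`
belongs to at most finitely many `Q_n`. -/
theorem measure_theoretical_lemma (X : Set ℝ) (hX : MeasurableSet X)
    (D : ℕ → ℝ → Set ℝ)
    (hDint : ∀ x ∈ X, ∀ n, ∃ u w : ℝ, u < w ∧ Ioo u w ⊆ D n x ∧ D n x ⊆ Icc u w)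
    (hDmem : ∀ x ∈ X, ∀ n, x ∈ D n x)
    (hDnest : ∀ x ∈ X, ∀ n, D (n + 1) x ⊆ D n x)
    (hDconv : ∀ x ∈ X, Tendsto (fun n => volume (D n x)) atTop (𝓝 0))
    (hDdisj : ∀ x₁ ∈ X, ∀ x₂ ∈ X, ∀ n, D n x₁ = D n x₂ ∨ Disjoint (D n x₁) (D n x₂))
    (Q : ℕ → Set ℝ) (hQ : ∀ n, MeasurableSet (Q n))
    (hsum : ∀ᵐ x ∂(volume.restrict X),
      Summable (fun n => (volume (Q n ∩ D n x)).toReal / (volume (D n x)).toReal)) :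
    volume {x | x ∈ X ∧ {n : ℕ | x ∈ Q n}.Finite} = volume X := by
  classical
  -- enriched interval data
  have hDIcc : ∀ x ∈ X, ∀ n, ∃ u w : ℝ, u < w ∧ x ∈ Icc u w ∧ D n x ⊆ Icc u w ∧
      MeasurableSet (D n x) ∧ volume (D n x) = ENNReal.ofReal (w - u) ∧
      ∀ t : Set ℝ, volume (t ∩ D n x) = volume (t ∩ Icc u w) := by
    intro x hx n
    obtain ⟨u, w, huw, h1, h2⟩ := hDint x hx n
    obtain ⟨hm, hv, ht⟩ := mtl_interval huw h1 h2
    exact ⟨u, w, huw, h2 (hDmem x hx n), h2, hm, hv, ht⟩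
  have hDmeas : ∀ x ∈ X, ∀ n, MeasurableSet (D n x) := by
    intro x hx n; obtain ⟨u, w, _, _, _, hm, _, _⟩ := hDIcc x hx n; exact hm
  have hDpos : ∀ x ∈ X, ∀ n, 0 < volume (D n x) := by
    intro x hx n
    obtain ⟨u, w, huw, _, _, _, hv, _⟩ := hDIcc x hx n
    rw [hv]; exact ENNReal.ofReal_pos.mpr (by linarith)
  have hDfin : ∀ x ∈ X, ∀ n, volume (D n x) ≠ ∞ := by
    intro x hx n
    obtain ⟨u, w, huw, _, _, _, hv, _⟩ := hDIcc x hx n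
    rw [hv]; exact ENNReal.ofReal_ne_top
  -- a point of X in an interval determines the interval
  have hEq : ∀ x ∈ X, ∀ y ∈ X, ∀ n, y ∈ D n x → D n y = D n x := by
    intro x hx y hy n hyx
    rcases hDdisj y hy x hx n with h | h
    · exact h
    · exact absurd (h.ne_of_mem (hDmem y hy n) hyx) (fun h' => h' rfl)
  -- countability of families of level-n intervals
  have hcount : ∀ (A : Set ℝ), A ⊆ X → ∀ n, (D n '' A).Countable := by
    intro A hA n
    apply mtl_countable
    · rintro I ⟨x, hx, rfl⟩
      obtain ⟨u, w, huw, h1, h2⟩ := hDint x (hA hx) n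
      obtain ⟨q, hq⟩ := exists_rat_btwn huw
      exact ⟨q, h1 hq⟩
    · rintro I ⟨x, hx, rfl⟩ J ⟨y, hy, rfl⟩
      exact hDdisj x (hA hx) y (hA hy) n
  -- the relative–measure function, in ℝ≥0∞
  set g : ℕ → ℝ → ℝ≥0∞ :=
    fun n x => if x ∈ X then volume (Q n ∩ D n x) / volume (D n x) else 0 with hg_def
  have hgmeas : ∀ n, Measurable (g n) := by
    intro n
    have hc : (D n '' X).Countable := hcount X (fun _ h => h) n
    haveI := hc.to_subtype
    have hrepr : g n = fun x => ∑' (I : D n '' X),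
        (X ∩ (I : Set ℝ)).indicator (fun _ => volume (Q n ∩ (I : Set ℝ)) / volume (I : Set ℝ)) x := by
      funext x
      by_cases hx : x ∈ X
      · rw [hg_def]
        simp only [if_pos hx]
        have h1 : (∑' (I : ↥(D n '' X)),
            (X ∩ (I : Set ℝ)).indicator
              (fun _ => volume (Q n ∩ (I : Set ℝ)) / volume (I : Set ℝ)) x)
            = (X ∩ D n x).indicator (fun _ => volume (Q n ∩ D n x) / volume (D n x)) x := by
          have hb : D n x ∈ D n '' X := mem_image_of_mem (D n) hx
          refine tsum_eq_single (f := fun I : ↥(D n '' X) =>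
            (X ∩ (I : Set ℝ)).indicator
              (fun _ => volume (Q n ∩ (I : Set ℝ)) / volume (I : Set ℝ)) x)
            (⟨D n x, hb⟩ : ↥(D n '' X)) ?_
          rintro ⟨I, y, hy, rfl⟩ hne
          refine indicator_of_notMem (fun hxI => hne ?_) _
          exact Subtype.ext (hEq y hy x hx n hxI.2).symm
        rw [h1, indicator_of_mem (show x ∈ X ∩ D n x from ⟨hx, hDmem x hx n⟩)]
      · rw [hg_def]
        simp only [if_neg hx]
        symm
        rw [ENNReal.tsum_eq_zero]
        rintro ⟨I, y, hy, rfl⟩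
        exact indicator_of_notMem (fun hxI => hx hxI.1) _
    rw [hrepr]
    apply Measurable.ennreal_tsum
    rintro ⟨I, y, hy, rfl⟩
    exact measurable_const.indicator (hX.inter (hDmeas y hy n))
  set G : ℝ → ℝ≥0∞ := fun x => ∑' n, g n x with hG_def
  have hGmeas : Measurable G := Measurable.ennreal_tsum hgmeas
  -- pointwise: summability implies finiteness of G
  have hfin : ∀ x ∈ X,
      Summable (fun n => (volume (Q n ∩ D n x)).toReal / (volume (D n x)).toReal) → G x ≠ ∞ := by
    intro x hx hsx
    have hgne : ∀ n, g n x ≠ ∞ := by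
      intro n
      rw [hg_def]
      simp only [if_pos hx]
      intro h
      rw [ENNReal.div_eq_top] at h
      rcases h with ⟨-, h0⟩ | ⟨ht, -⟩
      · exact (hDpos x hx n).ne' h0
      · exact hDfin x hx n (top_le_iff.mp (ht ▸ measure_mono inter_subset_right))
    have hco : ∀ n, g n x = ((g n x).toNNReal : ℝ≥0∞) :=
      fun n => (ENNReal.coe_toNNReal (hgne n)).symm
    have hs2 : Summable (fun n => (g n x).toNNReal) := by
      rw [← NNReal.summable_coe]
      refine hsx.congr fun n => ?_
      have h1 : ((g n x).toNNReal : ℝ) = (g n x).toReal := rfl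
      rw [h1, hg_def]
      simp only [if_pos hx]
      rw [ENNReal.toReal_div]
    have hGx : G x = ∑' n, ((g n x).toNNReal : ℝ≥0∞) := by
      simp only [hG_def]
      exact tsum_congr fun n => hco n
    rw [hGx]
    exact ENNReal.tsum_coe_ne_top_iff_summable.mpr hs2
  -- the good sets S M
  set S : ℕ → Set ℝ := fun M => X ∩ {x | G x ≤ M} with hS_def
  have hSmeas : ∀ M, MeasurableSet (S M) := fun M =>
    hX.inter (hGmeas measurableSet_Iic)
  have hSsub : ∀ M, S M ⊆ X := fun M => inter_subset_left
  -- density of S M along the intervals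
  have hdens : ∀ M, ∀ᵐ x ∂(volume.restrict (S M)),
      ∃ N, ∀ n ≥ N, volume (D n x) ≤ 2 * volume (S M ∩ D n x) ∧ volume (D n x) ≤ 1 := by
    intro M
    have hae2 := IsUnifLocDoublingMeasure.ae_tendsto_measure_inter_div (volume : Measure ℝ) (S M) 1
    filter_upwards [ae_restrict_mem (hSmeas M), hae2] with x hxS hxT
    have hxX : x ∈ X := hSsub M hxS
    choose u w huw hxIcc hsub hmeas' hvol ht using hDIcc x hxX
    set δ : ℕ → ℝ := fun n => (w n - u n) / 2 with hδ
    set c : ℕ → ℝ := fun n => (u n + w n) / 2 with hc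
    have hball : ∀ n, Metric.closedBall (c n) (δ n) = Icc (u n) (w n) := by
      intro n
      rw [Real.closedBall_eq_Icc]
      simp only [hδ, hc]
      congr 1 <;> ring
    have hδpos : ∀ n, 0 < δ n := fun n => by
      have := huw n
      simp only [hδ]
      linarith
    have hδlim : Tendsto δ atTop (𝓝[>] 0) := by
      apply tendsto_nhdsWithin_of_tendsto_nhds_of_eventually_within
      · have h1 : Tendsto (fun n => (volume (D n x)).toReal) atTop (𝓝 0) := by
          have h2 := (ENNReal.tendsto_toReal (by simp)).comp (hDconv x hxX)
          simpa [Function.comp_def] using h2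
        have h3 : δ = fun n => (volume (D n x)).toReal / 2 := by
          funext n
          rw [hvol n, ENNReal.toReal_ofReal (by linarith [huw n])]
        rw [h3]
        simpa using h1.div_const 2
      · exact Eventually.of_forall fun n => hδpos n
    have hT := hxT c δ hδlim (Eventually.of_forall fun n => by
      rw [one_mul, hball n]; exact hxIcc n)
    have hT' : Tendsto (fun n => volume (S M ∩ D n x) / volume (D n x)) atTop (𝓝 1) := by
      refine hT.congr fun n => ?_
      rw [hball n, ← ht n (S M)]
      congr 1
      rw [Real.volume_Icc, ← hvol n]
    have hev : ∀ᶠ n in atTop, (1/2 : ℝ≥0∞) ≤ volume (S M ∩ D n x) / volume (D n x)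
        ∧ volume (D n x) ≤ 1 := by
      apply Eventually.and
      · exact hT'.eventually (eventually_ge_nhds (ENNReal.half_lt_self one_ne_zero ENNReal.one_ne_top))
      · exact (hDconv x hxX).eventually (eventually_le_nhds zero_lt_one)
    obtain ⟨N, hN⟩ := eventually_atTop.mp hev
    refine ⟨N, fun n hn => ⟨?_, (hN n hn).2⟩⟩
    have h5 := (ENNReal.le_div_iff_mul_le (Or.inl (hDpos x hxX n).ne')
      (Or.inl (hDfin x hxX n))).mp (hN n hn).1
    calc volume (D n x) = 2 * (1/2 * volume (D n x)) := by
          rw [← mul_assoc, one_div, ENNReal.mul_inv_cancel two_ne_zero ENNReal.ofNat_ne_top, one_mul]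
      _ ≤ 2 * volume (S M ∩ D n x) := mul_le_mul_right h5 2
  -- the pieces A M N K
  set A : ℕ → ℕ → ℕ → Set ℝ := fun M N K =>
    {x | x ∈ S M ∧ x ∈ Icc (-(K : ℝ)) K ∧
      ∀ n ≥ N, volume (D n x) ≤ 2 * volume (S M ∩ D n x) ∧ volume (D n x) ≤ 1} with hA_def
  -- Borel–Cantelli on each piece
  have hBC : ∀ M N K, volume {x | x ∈ A M N K ∧ {n : ℕ | x ∈ Q n}.Infinite} = 0 := by
    intro M N K
    set B := A M N K with hB
    have hBsub : B ⊆ X := fun x hx => hSsub M hx.1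
    have hc : ∀ m, (D m '' B).Countable := fun m => hcount B hBsub m
    haveI : ∀ m, Countable ↥(D m '' B) := fun m => (hc m).to_subtype
    set W : Set ℝ := Icc (-(K : ℝ) - 1) ((K : ℝ) + 1) with hW
    set h : ℕ → ℝ → ℝ≥0∞ := fun m x => ∑' (I : ↥(D m '' B)),
      (S M ∩ (I : Set ℝ)).indicator
        (fun _ => volume (Q m ∩ (I : Set ℝ)) / volume (I : Set ℝ)) x with hh
    have hImeas : ∀ m (I : ↥(D m '' B)), MeasurableSet (I : Set ℝ) := by
      rintro m ⟨I, y, hy, rfl⟩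
      exact hDmeas y (hBsub hy) m
    have hhmeas : ∀ m, Measurable (h m) := by
      intro m
      apply Measurable.ennreal_tsum
      rintro ⟨I, y, hy, rfl⟩
      exact measurable_const.indicator ((hSmeas M).inter (hDmeas y (hBsub hy) m))
    -- step 1 : per-level bound
    have hstep1 : ∀ m, N ≤ m → volume (B ∩ Q m) ≤ 2 * ∫⁻ x, h m x := by
      intro m hm
      have hcover : B ∩ Q m ⊆ ⋃ I ∈ D m '' B, (Q m ∩ I) := by
        intro x hx
        exact mem_biUnion (mem_image_of_mem (D m) hx.1) ⟨hx.2, hDmem x (hBsub hx.1) m⟩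
      calc volume (B ∩ Q m) ≤ volume (⋃ I ∈ D m '' B, (Q m ∩ I)) := measure_mono hcover
        _ ≤ ∑' (I : ↥(D m '' B)), volume (Q m ∩ (I : Set ℝ)) :=
            measure_biUnion_le volume (hc m) _
        _ ≤ ∑' (I : ↥(D m '' B)), 2 * (volume (Q m ∩ (I : Set ℝ)) / volume (I : Set ℝ)
              * volume (S M ∩ (I : Set ℝ))) := by
            apply ENNReal.tsum_le_tsum
            rintro ⟨I, y, hy, rfl⟩
            have hyX : y ∈ X := hBsub hy
            have hd : volume (D m y) ≤ 2 * volume (S M ∩ D m y) := (hy.2.2 m hm).1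
            calc volume (Q m ∩ D m y)
                = volume (Q m ∩ D m y) / volume (D m y) * volume (D m y) := by
                  rw [ENNReal.div_mul_cancel (hDpos y hyX m).ne' (hDfin y hyX m)]
              _ ≤ volume (Q m ∩ D m y) / volume (D m y) * (2 * volume (S M ∩ D m y)) :=
                  mul_le_mul_right hd _
              _ = 2 * (volume (Q m ∩ D m y) / volume (D m y) * volume (S M ∩ D m y)) := by
                  ring
        _ = 2 * ∑' (I : ↥(D m '' B)), (volume (Q m ∩ (I : Set ℝ)) / volume (I : Set ℝ)
              * volume (S M ∩ (I : Set ℝ))) := ENNReal.tsum_mul_left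
        _ = 2 * ∫⁻ x, h m x := by
            congr 1
            simp only [hh]
            rw [lintegral_tsum (fun I => (measurable_const.indicator
              ((hSmeas M).inter (hImeas m I))).aemeasurable)]
            refine tsum_congr ?_
            intro I
            rw [lintegral_indicator_const ((hSmeas M).inter (hImeas m I))]
    -- step 2 : pointwise domination of h m
    have hstep2 : ∀ m, N ≤ m → ∀ x, h m x ≤ (S M ∩ W).indicator (fun y => g m y) x := by
      intro m hm x
      simp only [hh]
      by_cases hterm : ∃ I : ↥(D m '' B), x ∈ S M ∩ (I : Set ℝ)
      · obtain ⟨I₀, hI₀⟩ := hterm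
        have hxX : x ∈ X := hSsub M hI₀.1
        obtain ⟨y₀, hy₀, hI₀eq⟩ := I₀.2
        have hy₀X : y₀ ∈ X := hBsub hy₀
        have hIeq : (I₀ : Set ℝ) = D m x := by
          rw [← hI₀eq]
          exact (hEq y₀ hy₀X x hxX m (hI₀eq ▸ hI₀.2 : x ∈ D m y₀)).symm
        have hts : (∑' (I : ↥(D m '' B)), (S M ∩ (I : Set ℝ)).indicator
            (fun _ => volume (Q m ∩ (I : Set ℝ)) / volume (I : Set ℝ)) x)
            = (S M ∩ (I₀ : Set ℝ)).indicator
              (fun _ => volume (Q m ∩ (I₀ : Set ℝ)) / volume (I₀ : Set ℝ)) x := by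
          refine tsum_eq_single (f := fun I : ↥(D m '' B) => (S M ∩ (I : Set ℝ)).indicator
            (fun _ => volume (Q m ∩ (I : Set ℝ)) / volume (I : Set ℝ)) x) I₀ ?_
          rintro ⟨I, y, hy, rfl⟩ hne
          refine indicator_of_notMem (fun hxI => hne ?_) _
          apply Subtype.ext
          show D m y = (I₀ : Set ℝ)
          rw [hIeq]
          exact (hEq y (hBsub hy) x hxX m hxI.2).symm
        rw [hts]
        -- x lies in the window W
        have hxW : x ∈ W := by
          obtain ⟨u, w, huw, -, hsub, -, hvol, -⟩ := hDIcc y₀ hy₀X m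
          have h1 : volume (D m y₀) ≤ 1 := (hy₀.2.2 m hm).2
          have hwu : w - u ≤ 1 := by
            rw [hvol] at h1
            exact (ENNReal.ofReal_le_one.mp h1)
          have hxuw : x ∈ Icc u w := hsub (hI₀eq ▸ hI₀.2)
          have hyuw : y₀ ∈ Icc u w := hsub (hDmem y₀ hy₀X m)
          have hyK : y₀ ∈ Icc (-(K : ℝ)) K := hy₀.2.1
          simp only [hW, mem_Icc] at *
          constructor <;> linarith [hxuw.1, hxuw.2, hyuw.1, hyuw.2, hyK.1, hyK.2]
        have hgoal : (S M ∩ W).indicator (fun y => g m y) x = g m x :=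
          indicator_of_mem (mem_inter hI₀.1 hxW) _
        rw [indicator_of_mem hI₀, hgoal, hg_def]
        simp only [if_pos hxX]
        rw [hIeq]
      · push_neg at hterm
        have hz : (∑' (I : ↥(D m '' B)), (S M ∩ (I : Set ℝ)).indicator
            (fun _ => volume (Q m ∩ (I : Set ℝ)) / volume (I : Set ℝ)) x) = 0 :=
          ENNReal.tsum_eq_zero.mpr fun I => indicator_of_notMem (hterm I) _
        rw [hz]
        exact zero_le
    -- step 3 : summability of the tail
    have hWvol : volume W ≠ ∞ := by
      rw [hW, Real.volume_Icc]
      exact ENNReal.ofReal_ne_top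
    have hsum3 : ∑' n, volume (B ∩ Q (N + n)) ≠ ∞ := by
      have hfin2 : (2 : ℝ≥0∞) * ((M : ℝ≥0∞) * volume W) ≠ ∞ :=
        ENNReal.mul_ne_top (by simp) (ENNReal.mul_ne_top (by simp) hWvol)
      refine ne_top_of_le_ne_top hfin2 ?_
      calc ∑' n, volume (B ∩ Q (N + n))
          ≤ ∑' n, 2 * ∫⁻ x, h (N + n) x :=
            ENNReal.tsum_le_tsum fun n => hstep1 _ (Nat.le_add_right N n)
        _ = 2 * ∑' n, ∫⁻ x, h (N + n) x := ENNReal.tsum_mul_left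
        _ = 2 * ∫⁻ x, ∑' n, h (N + n) x := by
            rw [← lintegral_tsum (fun n => (hhmeas (N + n)).aemeasurable)]
        _ ≤ 2 * ∫⁻ x, (S M ∩ W).indicator G x := by
            apply mul_le_mul_right
            apply lintegral_mono
            intro x
            calc ∑' n, h (N + n) x
                ≤ ∑' n, (S M ∩ W).indicator (fun y => g (N + n) y) x :=
                  ENNReal.tsum_le_tsum fun n => hstep2 _ (Nat.le_add_right N n) x
              _ ≤ (S M ∩ W).indicator G x := by
                  by_cases hx : x ∈ S M ∩ W
                  · simp only [indicator_of_mem hx]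
                    simp only [hG_def]
                    exact ENNReal.tsum_comp_le_tsum_of_injective
                      (add_right_injective N) (fun n => g n x)
                  · simp only [indicator_of_notMem hx, tsum_zero, le_refl]
        _ ≤ 2 * ((M : ℝ≥0∞) * volume W) := by
            apply mul_le_mul_right
            calc ∫⁻ x, (S M ∩ W).indicator G x
                ≤ ∫⁻ x, W.indicator (fun _ => (M : ℝ≥0∞)) x := by
                  apply lintegral_mono
                  intro x
                  by_cases hx : x ∈ S M ∩ W
                  · rw [indicator_of_mem hx, indicator_of_mem hx.2]
                    exact hx.1.2
                  · rw [indicator_of_notMem hx]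
                    exact zero_le
              _ = (M : ℝ≥0∞) * volume W := lintegral_indicator_const measurableSet_Icc _
    -- step 4 : Borel–Cantelli
    have hlim := measure_limsup_atTop_eq_zero (s := fun n => B ∩ Q (N + n)) hsum3
    refine measure_mono_null ?_ hlim
    intro x hx
    rw [mem_limsup_iff_frequently_mem, frequently_atTop]
    intro a
    obtain ⟨m, hmQ, hma⟩ := hx.2.exists_gt (N + a)
    refine ⟨m - N, by omega, hx.1, ?_⟩
    show x ∈ Q (N + (m - N))
    rwa [show N + (m - N) = m by omega]
  -- the bad set is null
  have hbad : volume {x | x ∈ X ∧ ¬ {n : ℕ | x ∈ Q n}.Finite} = 0 := by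
    have hN1 : volume ({x | ¬ Summable (fun n =>
        (volume (Q n ∩ D n x)).toReal / (volume (D n x)).toReal)} ∩ X) = 0 := by
      have h1 := ae_iff.mp hsum
      rwa [Measure.restrict_apply' hX] at h1
    have hE : ∀ M, volume ({x | ¬ ∃ N, ∀ n ≥ N,
        volume (D n x) ≤ 2 * volume (S M ∩ D n x) ∧ volume (D n x) ≤ 1} ∩ S M) = 0 := by
      intro M
      have h1 := ae_iff.mp (hdens M)
      rwa [Measure.restrict_apply' (hSmeas M)] at h1
    have hcov : {x | x ∈ X ∧ ¬ {n : ℕ | x ∈ Q n}.Finite} ⊆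
        ({x | ¬ Summable (fun n =>
            (volume (Q n ∩ D n x)).toReal / (volume (D n x)).toReal)} ∩ X)
        ∪ ((⋃ M, ({x | ¬ ∃ N, ∀ n ≥ N,
            volume (D n x) ≤ 2 * volume (S M ∩ D n x) ∧ volume (D n x) ≤ 1} ∩ S M))
          ∪ ⋃ M, ⋃ N, ⋃ K, {x | x ∈ A M N K ∧ {n : ℕ | x ∈ Q n}.Infinite}) := by
      intro x hx
      by_cases hs : Summable (fun n =>
          (volume (Q n ∩ D n x)).toReal / (volume (D n x)).toReal)
      · have hGfin := hfin x hx.1 hs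
        obtain ⟨M, hM⟩ := ENNReal.exists_nat_gt hGfin
        have hxS : x ∈ S M := ⟨hx.1, le_of_lt hM⟩
        by_cases hd : ∃ N, ∀ n ≥ N,
            volume (D n x) ≤ 2 * volume (S M ∩ D n x) ∧ volume (D n x) ≤ 1
        · obtain ⟨N, hN⟩ := hd
          obtain ⟨K, hK⟩ := exists_nat_ge |x|
          right; right
          refine mem_iUnion.mpr ⟨M, mem_iUnion.mpr ⟨N, mem_iUnion.mpr ⟨K, ?_⟩⟩⟩
          exact ⟨⟨hxS, mem_Icc.mpr ⟨neg_le_of_abs_le hK, le_of_abs_le hK⟩, hN⟩, hx.2⟩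
        · right; left
          exact mem_iUnion.mpr ⟨M, ⟨hd, hxS⟩⟩
      · exact Or.inl ⟨hs, hx.1⟩
    refine measure_mono_null hcov ?_
    apply measure_union_null hN1
    apply measure_union_null
    · exact measure_iUnion_null hE
    · exact measure_iUnion_null fun M => measure_iUnion_null fun N =>
        measure_iUnion_null fun K => hBC M N K
  -- conclusion
  refine le_antisymm (measure_mono (fun x hx => hx.1)) ?_
  calc volume X ≤ volume ({x | x ∈ X ∧ {n : ℕ | x ∈ Q n}.Finite}
        ∪ {x | x ∈ X ∧ ¬ {n : ℕ | x ∈ Q n}.Finite}) := by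
        refine measure_mono ?_
        intro x hx
        by_cases h : {n : ℕ | x ∈ Q n}.Finite
        · exact Or.inl ⟨hx, h⟩
        · exact Or.inr ⟨hx, h⟩
    _ ≤ volume {x | x ∈ X ∧ {n : ℕ | x ∈ Q n}.Finite} + volume {x | x ∈ X ∧ ¬ {n : ℕ | x ∈ Q n}.Finite} :=
        measure_union_le _ _
    _ = volume {x | x ∈ X ∧ {n : ℕ | x ∈ Q n}.Finite} := by rw [hbad, add_zero]
end

section
/- Let X ⊆ ℝ be a measurable set such that to each x ∈ X there is associated a sequence D_n(x) of nested intervals converging to x (x ∈ D_{n+1}(x) ⊆ D_n(x) and |D_n(x)| → 0), with the property that for all x₁, x₂ ∈ X and all n, the intervals D_n(x₁) and D_n(x₂) are either equal or disjoint. Let Q_{n,m} (m ≥ n) be measurable subsets of ℝ, let Y_n be the set of x belonging to at most finitely many Q_{n,m}, and set q_{n,m}(x) = |Q_{n,m} ∩ D_m(x)|/|D_m(x)|. Suppose n₀ : X → ℕ ∪ {∞} is such that Σ_{m ≥ n} q_{n,m}(x) < ∞ for every n ≥ n₀(x). Then for almost every x ∈ X, x ∈ Y_n for every n ≥ n₀(x).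 -/
open Set Filter MeasureTheory Topology
open scoped ENNReal NNReal

/-- Variant of the measure-theoretical lemma with doubly-indexed bad sets `Q_{n,m}`:
if `Σ_{m ≥ n} q_{n,m}(x) < ∞` for all `n ≥ n₀(x)`, then for almost every `x ∈ X`,
`x` belongs to at most finitely many `Q_{n,m}` for each `n ≥ n₀(x)`. -/
theorem measure_theoretical_lemma_doubly_indexed (X : Set ℝ) (hX : MeasurableSet X)
    (D : ℕ → ℝ → Set ℝ)
    (hDint : ∀ x ∈ X, ∀ n, ∃ u w : ℝ, u < w ∧ Ioo u w ⊆ D n x ∧ D n x ⊆ Icc u w)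
    (hDmem : ∀ x ∈ X, ∀ n, x ∈ D n x)
    (hDnest : ∀ x ∈ X, ∀ n, D (n + 1) x ⊆ D n x)
    (hDconv : ∀ x ∈ X, Tendsto (fun n => volume (D n x)) atTop (𝓝 0))
    (hDdisj : ∀ x₁ ∈ X, ∀ x₂ ∈ X, ∀ n, D n x₁ = D n x₂ ∨ Disjoint (D n x₁) (D n x₂))
    (Q : ℕ → ℕ → Set ℝ) (hQ : ∀ n m, MeasurableSet (Q n m))
    (n₀ : ℝ → ℕ∞)
    (hsum : ∀ x ∈ X, ∀ n : ℕ, n₀ x ≤ (n : ℕ∞) →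
      Summable (fun m : ℕ =>
        if n ≤ m then (volume (Q n m ∩ D m x)).toReal / (volume (D m x)).toReal else 0)) :
    ∀ᵐ x ∂(volume.restrict X), ∀ n : ℕ, n₀ x ≤ (n : ℕ∞) →
      {m : ℕ | n ≤ m ∧ x ∈ Q n m}.Finite := by
  classical
  -- the real-valued ratio function
  set f : ℕ → ℝ → ℕ → ℝ := fun n x m =>
    if n ≤ m then (volume (Q n m ∩ D m x)).toReal / (volume (D m x)).toReal else 0 with hf
  have hfnonneg : ∀ n x m, 0 ≤ f n x m := by
    intro n x m
    simp only [hf]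
    split
    · positivity
    · exact le_rfl
  -- basic facts about the intervals
  have hDmono : ∀ x ∈ X, ∀ {m m' : ℕ}, m ≤ m' → D m' x ⊆ D m x := by
    intro x hx m m' h
    induction m', h using Nat.le_induction with
    | base => exact subset_rfl
    | succ k hk ih => exact (hDnest x hx k).trans ih
  have hDmeas : ∀ x ∈ X, ∀ m, MeasurableSet (D m x) := by
    intro x hx m
    obtain ⟨u, w, huw, h1, h2⟩ := hDint x hx m
    have hEq : Ioo u w ∪ (D m x \ Ioo u w) = D m x := union_diff_cancel h1
    rw [← hEq]
    refine measurableSet_Ioo.union ?_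
    have hsub : D m x \ Ioo u w ⊆ Icc u w \ Ioo u w := diff_subset_diff_left h2
    rw [Icc_diff_Ioo_same huw.le] at hsub
    exact (Set.Finite.subset (by simp : ({u, w} : Set ℝ).Finite) hsub).measurableSet
  have hDpos : ∀ x ∈ X, ∀ m, volume (D m x) ≠ 0 := by
    intro x hx m
    obtain ⟨u, w, huw, h1, h2⟩ := hDint x hx m
    have h0 : (0 : ℝ≥0∞) < volume (Ioo u w) := by
      rw [Real.volume_Ioo]
      simpa using sub_pos.2 huw
    exact (h0.trans_le (measure_mono h1)).ne'
  have hDfin : ∀ x ∈ X, ∀ m, volume (D m x) ≠ ⊤ := by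
    intro x hx m
    obtain ⟨u, w, huw, h1, h2⟩ := hDint x hx m
    refine ((measure_mono h2).trans_lt ?_).ne
    rw [Real.volume_Icc]
    exact ENNReal.ofReal_lt_top
  -- the sets on which everything is uniform
  set Z : ℕ → ℕ → ℕ → Set ℝ := fun n N R =>
    {x | x ∈ X ∧ |x| ≤ (R : ℝ) ∧ volume (D N x) ≤ 1 ∧ Summable (f n x) ∧
      (∑' j, f n x (j + N)) ≤ 1 / 2} with hZ
  -- KEY LEMMA: for each (n, N, R) with n ≤ N, the limsup of Z ∩ Q n m is null
  have key : ∀ n N R : ℕ, n ≤ N →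
      volume (limsup (fun m => Z n N R ∩ Q n m) atTop) = 0 := by
    intro n N R hnN
    set Z₀ := Z n N R with hZ₀
    have hZX : Z₀ ⊆ X := fun x hx => hx.1
    -- support: all intervals at level ≥ N based at points of Z₀ are in a fixed big interval
    have hsupp : ∀ x ∈ Z₀, ∀ m, N ≤ m → D m x ⊆ Icc (-(R + 1) : ℝ) (R + 1) := by
      intro x hx m hm
      obtain ⟨u, w, huw, h1, h2⟩ := hDint x (hZX hx) N
      have hxuw : x ∈ Icc u w := h2 (hDmem x (hZX hx) N)
      have hwu : w - u ≤ 1 := by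
        have hle : ENNReal.ofReal (w - u) ≤ 1 := by
          rw [← Real.volume_Ioo]
          exact (measure_mono h1).trans hx.2.2.1
        exact_mod_cast ENNReal.ofReal_le_one.mp hle
      have hxR := abs_le.mp hx.2.1
      intro z hz
      have hz' : z ∈ Icc u w := h2 (hDmono x (hZX hx) hm hz)
      constructor
      · have : u ≥ w - 1 := by linarith
        have : z ≥ u := hz'.1
        have : x ≤ w := hxuw.2
        simp only [neg_add]
        linarith [hz'.1, hxuw.2, hxR.1]
      · linarith [hz'.2, hxuw.1, hxR.2]
    -- countable set of representatives at each level
    have hrep : ∀ m, ∃ T : Set ℝ, T.Countable ∧ T ⊆ Z₀ ∧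
        (∀ x ∈ Z₀, ∃ x' ∈ T, D m x' = D m x) ∧ T.InjOn (D m) := by
      intro m
      have hP : ((fun x => D m x) '' Z₀).Countable := by
        refine Set.PairwiseDisjoint.countable_of_nonempty_interior (s := id)
          (a := (fun x => D m x) '' Z₀) ?_ ?_
        · rintro I ⟨x, hx, rfl⟩ J ⟨y, hy, rfl⟩ hne
          rcases hDdisj x (hZX hx) y (hZX hy) m with h | h
          · exact absurd h hne
          · exact h
        · rintro I ⟨x, hx, rfl⟩
          obtain ⟨u, w, huw, h1, h2⟩ := hDint x (hZX hx) m
          exact ⟨(u + w) / 2, interior_maximal h1 isOpen_Ioo (by constructor <;> linarith)⟩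
      have hsel : ∀ I : ((fun x => D m x) '' Z₀), ∃ x, x ∈ Z₀ ∧ D m x = (I : Set ℝ) := by
        rintro ⟨I, x, hx, rfl⟩
        exact ⟨x, hx, rfl⟩
      choose g hg1 hg2 using hsel
      haveI := hP.to_subtype
      refine ⟨Set.range g, countable_range g, ?_, ?_, ?_⟩
      · rintro _ ⟨I, rfl⟩; exact hg1 I
      · intro x hx
        refine ⟨g ⟨D m x, x, hx, rfl⟩, mem_range_self _, hg2 _⟩
      · rintro _ ⟨I, rfl⟩ _ ⟨J, rfl⟩ hIJ
        have : (I : Set ℝ) = (J : Set ℝ) := by rw [← hg2 I, ← hg2 J, hIJ]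
        rw [Subtype.ext this]
    choose T hTc hTZ hTcov hTinj using hrep
    haveI : ∀ m, Countable (T m) := fun m => (hTc m).to_subtype
    -- the comparison functions
    set G : ℕ → ℝ → ℝ≥0∞ := fun m y =>
      ∑' x : T m, (D m (x : ℝ)).indicator
        (fun _ => volume (Q n m ∩ D m (x : ℝ)) / volume (D m (x : ℝ))) y with hG
    have hGmeas : ∀ m, Measurable (G m) := by
      intro m
      exact Measurable.ennreal_tsum fun x =>
        measurable_const.indicator (hDmeas _ (hZX (hTZ m x.2)) m)
    -- measure of Z₀ ∩ Q n m is at most the integral of G m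
    have hvol_le : ∀ m, volume (Z₀ ∩ Q n m) ≤ ∫⁻ y, G m y := by
      intro m
      have h1 : Z₀ ∩ Q n m ⊆ ⋃ x ∈ T m, Q n m ∩ D m x := by
        rintro y ⟨hyZ, hyQ⟩
        obtain ⟨x', hx'T, hx'D⟩ := hTcov m y hyZ
        exact mem_iUnion₂.2 ⟨x', hx'T, hyQ, hx'D ▸ hDmem y (hZX hyZ) m⟩
      calc volume (Z₀ ∩ Q n m) ≤ ∑' x : T m, volume (Q n m ∩ D m (x : ℝ)) :=
            (measure_mono h1).trans (measure_biUnion_le volume (hTc m) _)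
        _ = ∑' x : T m, ∫⁻ y, (D m (x : ℝ)).indicator
              (fun _ => volume (Q n m ∩ D m (x : ℝ)) / volume (D m (x : ℝ))) y := by
            congr 1
            funext x
            rw [lintegral_indicator_const (hDmeas _ (hZX (hTZ m x.2)) m),
              ENNReal.div_mul_cancel (hDpos _ (hZX (hTZ m x.2)) m)
                (hDfin _ (hZX (hTZ m x.2)) m)]
        _ = ∫⁻ y, G m y := by
            rw [← lintegral_tsum fun x =>
              (measurable_const.indicator (hDmeas _ (hZX (hTZ m x.2)) m)).aemeasurable]
    -- pointwise bound on partial sums of G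
    have hpt : ∀ (y : ℝ) (M : ℕ),
        ∑ j ∈ Finset.range M, G (j + N) y ≤ ENNReal.ofReal (1 / 2) := by
      intro y M
      set A := (Finset.range M).filter (fun j => ∃ x ∈ T (j + N), y ∈ D (j + N) x) with hA
      have hGzero : ∀ j ∈ Finset.range M, j ∉ A → G (j + N) y = 0 := by
        intro j hjM hj
        have hnone : ∀ x : T (j + N), y ∉ D (j + N) (x : ℝ) := by
          intro x hy
          exact hj (Finset.mem_filter.2 ⟨hjM, ⟨x, x.2, hy⟩⟩)
        simp only [hG]
        rw [Summable.tsum_eq_zero_iff (by exact ENNReal.summable)]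
        intro x
        exact indicator_of_notMem (hnone x) _
      rcases A.eq_empty_or_nonempty with hAe | hAne
      · have : ∑ j ∈ Finset.range M, G (j + N) y = 0 :=
          Finset.sum_eq_zero fun j hj => hGzero j hj (by simp [hAe])
        rw [this]; exact zero_le
      · obtain ⟨x₁, hx₁T, hyx₁⟩ :=
          (Finset.mem_filter.1 (A.max'_mem hAne)).2
        set m₁ := A.max' hAne with hm₁
        have hx₁Z : x₁ ∈ Z₀ := hTZ _ hx₁T
        have hx₁X : x₁ ∈ X := hZX hx₁Z
        -- the value of G at levels in A
        have hval : ∀ j ∈ A, G (j + N) y =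
            volume (Q n (j + N) ∩ D (j + N) x₁) / volume (D (j + N) x₁) := by
          intro j hjA
          obtain ⟨x', hx'T, hyx'⟩ := (Finset.mem_filter.1 hjA).2
          have hjm₁ : j ≤ m₁ := A.le_max' j hjA
          have hyx₁' : y ∈ D (j + N) x₁ :=
            hDmono x₁ hx₁X (by omega : j + N ≤ m₁ + N) hyx₁
          have hDeq : D (j + N) x' = D (j + N) x₁ := by
            rcases hDdisj x' (hZX (hTZ _ hx'T)) x₁ hx₁X (j + N) with h | h
            · exact h
            · exact absurd (Set.not_disjoint_iff.2 ⟨y, hyx', hyx₁'⟩) (by simp [h])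
          have huniq : ∀ x'' : T (j + N), x'' ≠ ⟨x', hx'T⟩ →
              (D (j + N) (x'' : ℝ)).indicator
                (fun _ => volume (Q n (j + N) ∩ D (j + N) (x'' : ℝ)) /
                  volume (D (j + N) (x'' : ℝ))) y = 0 := by
            intro x'' hne
            by_cases hy'' : y ∈ D (j + N) (x'' : ℝ)
            · exfalso
              have hDeq2 : D (j + N) (x'' : ℝ) = D (j + N) x' := by
                rcases hDdisj (x'' : ℝ) (hZX (hTZ _ x''.2)) x' (hZX (hTZ _ hx'T))
                    (j + N) with h | h
                · exact h
                · exact absurd (Set.not_disjoint_iff.2 ⟨y, hy'', hyx'⟩) (by simp [h])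
              exact hne (Subtype.ext (hTinj (j + N) x''.2 hx'T hDeq2))
            · exact indicator_of_notMem hy'' _
          have : G (j + N) y = (D (j + N) x').indicator
              (fun _ => volume (Q n (j + N) ∩ D (j + N) x') /
                volume (D (j + N) x')) y := by
            simp only [hG]
            exact tsum_eq_single (⟨x', hx'T⟩ : T (j + N)) huniq
          rw [this, indicator_of_mem hyx', hDeq]
        -- convert to the real tail sum
        have hsum₁ : Summable (fun j => f n x₁ (j + N)) :=
          (summable_nat_add_iff N).2 hx₁Z.2.2.2.1
        calc ∑ j ∈ Finset.range M, G (j + N) y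
            = ∑ j ∈ A, G (j + N) y :=
              (Finset.sum_subset (Finset.filter_subset _ _) hGzero).symm
          _ = ∑ j ∈ A, ENNReal.ofReal (f n x₁ (j + N)) := by
              refine Finset.sum_congr rfl fun j hj => ?_
              rw [hval j hj]
              have hfin : volume (Q n (j + N) ∩ D (j + N) x₁) / volume (D (j + N) x₁) ≠ ⊤ :=
                (ENNReal.div_lt_top
                  (fun h => (hDfin x₁ hx₁X (j + N))
                    (top_le_iff.1 (h ▸ measure_mono inter_subset_right)))
                  (hDpos x₁ hx₁X (j + N))).ne
              have hfeq : f n x₁ (j + N) =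
                  (volume (Q n (j + N) ∩ D (j + N) x₁) / volume (D (j + N) x₁)).toReal := by
                rw [ENNReal.toReal_div]
                simp only [hf, if_pos (by omega : n ≤ j + N)]
              rw [hfeq, ENNReal.ofReal_toReal hfin]
          _ = ENNReal.ofReal (∑ j ∈ A, f n x₁ (j + N)) :=
              (ENNReal.ofReal_sum_of_nonneg fun j _ => hfnonneg n x₁ (j + N)).symm
          _ ≤ ENNReal.ofReal (1 / 2) := by
              refine ENNReal.ofReal_le_ofReal ?_
              refine le_trans (hsum₁.sum_le_tsum A (fun j _ => hfnonneg n x₁ (j + N)))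
                hx₁Z.2.2.2.2
    -- integrate the pointwise bound
    set C : ℝ≥0∞ := ENNReal.ofReal (1 / 2) * volume (Icc (-(R + 1) : ℝ) (R + 1)) with hC
    have hbdd : ∀ M : ℕ, ∑ j ∈ Finset.range M, volume (Z₀ ∩ Q n (j + N)) ≤ C := by
      intro M
      calc ∑ j ∈ Finset.range M, volume (Z₀ ∩ Q n (j + N))
          ≤ ∑ j ∈ Finset.range M, ∫⁻ y, G (j + N) y :=
            Finset.sum_le_sum fun j _ => hvol_le _
        _ = ∫⁻ y, ∑ j ∈ Finset.range M, G (j + N) y :=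
            (lintegral_finset_sum _ fun j _ => hGmeas _).symm
        _ ≤ ∫⁻ y, (Icc (-(R + 1) : ℝ) (R + 1)).indicator
              (fun _ => ENNReal.ofReal (1 / 2)) y := by
            refine lintegral_mono fun y => ?_
            by_cases hy : y ∈ Icc (-(R + 1) : ℝ) (R + 1)
            · rw [indicator_of_mem hy]; exact hpt y M
            · rw [indicator_of_notMem hy]
              refine le_of_eq (Finset.sum_eq_zero fun j _ => ?_)
              simp only [hG]
              rw [Summable.tsum_eq_zero_iff (by exact ENNReal.summable)]
              intro x
              refine indicator_of_notMem (fun hyD => hy ?_) _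
              exact hsupp (x : ℝ) (hTZ _ x.2) (j + N) (by omega) hyD
        _ = C := lintegral_indicator_const measurableSet_Icc _
    -- the total series is finite
    have htsum : (∑' m, volume (Z₀ ∩ Q n m)) ≠ ⊤ := by
      have hCfin : C ≠ ⊤ := by
        simp only [hC, Real.volume_Icc]
        exact (ENNReal.mul_lt_top ENNReal.ofReal_lt_top ENNReal.ofReal_lt_top).ne
      have hsmall : ∀ m, volume (Z₀ ∩ Q n m) ≤ volume (Icc (-(R : ℝ)) R) := by
        intro m
        refine measure_mono fun x hx => ?_
        have := abs_le.mp hx.1.2.1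
        exact ⟨this.1, this.2⟩
      set B : ℝ≥0∞ := N * volume (Icc (-(R : ℝ)) R) + C with hB
      have hBfin : B ≠ ⊤ := by
        simp only [hB, Real.volume_Icc]
        refine ENNReal.add_ne_top.2 ⟨?_, hCfin⟩
        exact (ENNReal.mul_lt_top (by simp) ENNReal.ofReal_lt_top).ne
      have hall : ∀ M : ℕ, ∑ m ∈ Finset.range M, volume (Z₀ ∩ Q n m) ≤ B := by
        intro M
        rcases le_total M N with hMN | hNM
        · refine le_trans (Finset.sum_le_sum_of_subset
            (Finset.range_subset_range.2 hMN)) ?_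
          refine le_trans ?_ (le_add_right le_rfl)
          calc ∑ m ∈ Finset.range N, volume (Z₀ ∩ Q n m)
              ≤ ∑ _m ∈ Finset.range N, volume (Icc (-(R : ℝ)) R) :=
                Finset.sum_le_sum fun m _ => hsmall m
            _ = N * volume (Icc (-(R : ℝ)) R) := by
                rw [Finset.sum_const, Finset.card_range, nsmul_eq_mul]
        · rw [Finset.range_eq_Ico, ← Finset.sum_Ico_consecutive _ (Nat.zero_le N) hNM]
          refine add_le_add ?_ ?_
          · rw [← Finset.range_eq_Ico]
            calc ∑ m ∈ Finset.range N, volume (Z₀ ∩ Q n m)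
                ≤ ∑ _m ∈ Finset.range N, volume (Icc (-(R : ℝ)) R) :=
                  Finset.sum_le_sum fun m _ => hsmall m
              _ = N * volume (Icc (-(R : ℝ)) R) := by
                  rw [Finset.sum_const, Finset.card_range, nsmul_eq_mul]
          · rw [Finset.sum_Ico_eq_sum_range]
            refine le_trans (le_of_eq ?_) (hbdd (M - N))
            exact Finset.sum_congr rfl fun j _ => by rw [Nat.add_comm N j]
      rw [ENNReal.tsum_eq_iSup_nat]
      exact ((iSup_le hall).trans_lt hBfin.lt_top).ne
    exact measure_limsup_atTop_eq_zero htsum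
  -- assemble
  have main : volume (⋃ n, ⋃ k, ⋃ R,
      limsup (fun m => Z n (n + k) R ∩ Q n m) atTop) = 0 :=
    measure_iUnion_null fun n => measure_iUnion_null fun k => measure_iUnion_null fun R =>
      key n (n + k) R (Nat.le_add_right _ _)
  rw [ae_iff, Measure.restrict_apply' hX]
  refine measure_mono_null ?_ main
  rintro x ⟨hxbad, hxX⟩
  simp only [mem_setOf_eq, not_forall] at hxbad
  obtain ⟨n, hn, hinf⟩ := hxbad
  have hxinf : {m : ℕ | n ≤ m ∧ x ∈ Q n m}.Infinite := hinf
  have hxsum : Summable (f n x) := hsum x hxX n hn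
  -- find a suitable N
  have hE1 : ∀ᶠ N in atTop, volume (D N x) ≤ 1 :=
    ((hDconv x hxX).eventually_le_const (by norm_num : (0 : ℝ≥0∞) < 1))
  have hE2 : ∀ᶠ N in atTop, (∑' j, f n x (j + N)) ≤ 1 / 2 := by
    have ht : Tendsto (fun N => ∑' j, f n x (j + N)) atTop (𝓝 0) :=
      tendsto_sum_nat_add (f n x)
    exact ht.eventually_le_const (by norm_num : (0 : ℝ) < 1 / 2)
  have hE3 : ∀ᶠ N in atTop, n ≤ N := eventually_ge_atTop n
  obtain ⟨N, h1, h2, h3⟩ := (hE1.and (hE2.and hE3)).exists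
  set R : ℕ := ⌈|x|⌉₊ with hR
  have hxZ : x ∈ Z n N R :=
    ⟨hxX, Nat.le_ceil _, h1, hxsum, h2⟩
  refine mem_iUnion.2 ⟨n, mem_iUnion.2 ⟨N - n, mem_iUnion.2 ⟨R, ?_⟩⟩⟩
  have hNn : n + (N - n) = N := by omega
  rw [hNn]
  rw [mem_limsup_iff_frequently_mem]
  rw [frequently_atTop]
  intro a
  obtain ⟨m, hm, ham⟩ := hxinf.exists_gt a
  exact ⟨m, ham.le, hxZ, hm.2⟩
end

section
/- Fix k ≥ 1 and define the k-quasisymmetric capacity of a set X in a bounded interval I by p_k(X|I) = sup_h |h(X ∩ I)|/|h(I)|, the supremum over all homeomorphisms h of ℝ quasisymmetric with constant k. If {I^j} is a (finite or countable) family of pairwise disjoint subintervals of I and X ⊆ ∪_j I^j, then p_k(X|I) ≤ p_k(∪_j I^j | I) · sup_j p_k(X|I^j). -/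
open Set Filter MeasureTheory Topology

noncomputable section

/-- `h` is a quasisymmetric homeomorphism of `ℝ` with constant `k`. -/
def QSHomeo (k : ℝ) (h : ℝ → ℝ) : Prop :=
  IsHomeomorph h ∧ ∀ x t : ℝ, 0 < t →
    1 / k ≤ (h (x + t) - h x) / (h x - h (x - t)) ∧
      (h (x + t) - h x) / (h x - h (x - t)) ≤ k

/-- The `k`-quasisymmetric capacity of `X` in `I`:
`p_k(X|I) = sup_h |h(X ∩ I)| / |h(I)|` over quasisymmetric homeomorphisms with
constant `k`. -/
def qsCap (k : ℝ) (X I : Set ℝ) : ℝ :=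
  ⨆ h ∈ {h : ℝ → ℝ | QSHomeo k h},
    (volume (h '' (X ∩ I))).toReal / (volume (h '' I)).toReal

lemma qsCap_nonneg (k : ℝ) (X I : Set ℝ) : 0 ≤ qsCap k X I := by
  refine Real.iSup_nonneg fun h => Real.iSup_nonneg fun _ => ?_
  positivity

lemma image_vol_lt_top {h : ℝ → ℝ} (hc : Continuous h) {s : Set ℝ} {a b : ℝ}
    (hs : s ⊆ Icc a b) : volume (h '' s) < ⊤ :=
  lt_of_le_of_lt (measure_mono (image_mono hs))
    ((isCompact_Icc.image hc).measure_lt_top)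

lemma ratio_le_one {h : ℝ → ℝ} (hc : Continuous h) {X I : Set ℝ} {a b : ℝ}
    (hI : I ⊆ Icc a b) :
    (volume (h '' (X ∩ I))).toReal / (volume (h '' I)).toReal ≤ 1 := by
  apply div_le_one_of_le₀
  · exact ENNReal.toReal_mono (image_vol_lt_top hc hI).ne
       (measure_mono (image_mono inter_subset_right))
  · exact ENNReal.toReal_nonneg

lemma qsCap_bddAbove (k : ℝ) (X I : Set ℝ) {a b : ℝ} (hI : I ⊆ Icc a b) :
    BddAbove (range fun h : ℝ → ℝ => ⨆ _ : QSHomeo k h,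
      (volume (h '' (X ∩ I))).toReal / (volume (h '' I)).toReal) := by
  refine ⟨1, fun x hx => ?_⟩
  obtain ⟨h, rfl⟩ := hx
  exact Real.iSup_le (fun hq => ratio_le_one hq.1.continuous hI) zero_le_one

lemma qsCap_le_one (k : ℝ) (X I : Set ℝ) {a b : ℝ} (hI : I ⊆ Icc a b) :
    qsCap k X I ≤ 1 := by
  refine Real.iSup_le (fun h => ?_) zero_le_one
  exact Real.iSup_le (fun hq => ratio_le_one hq.1.continuous hI) zero_le_one

lemma competitor_bound {k : ℝ} {h : ℝ → ℝ} (hq : QSHomeo k h) (X I : Set ℝ)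
    {a b : ℝ} (hI : I ⊆ Icc a b) :
    volume (h '' (X ∩ I)) ≤ ENNReal.ofReal (qsCap k X I) * volume (h '' I) := by
  have hd : volume (h '' I) < ⊤ := image_vol_lt_top hq.1.continuous hI
  have hn : volume (h '' (X ∩ I)) ≤ volume (h '' I) :=
    measure_mono (image_mono inter_subset_right)
  have hratio :
      (volume (h '' (X ∩ I))).toReal / (volume (h '' I)).toReal ≤ qsCap k X I := by
    have := le_ciSup (qsCap_bddAbove k X I hI) h
    rw [ciSup_pos hq] at this
    exact this
  rcases eq_or_ne (volume (h '' I)) 0 with h0 | h0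
  · have : volume (h '' (X ∩ I)) = 0 := le_antisymm (h0 ▸ hn) zero_le
    simp [this]
  · have hdpos : 0 < (volume (h '' I)).toReal :=
      ENNReal.toReal_pos h0 hd.ne
    have hn' : (volume (h '' (X ∩ I))).toReal ≤
        qsCap k X I * (volume (h '' I)).toReal :=
      (div_le_iff₀ hdpos).mp hratio
    calc volume (h '' (X ∩ I))
        = ENNReal.ofReal (volume (h '' (X ∩ I))).toReal := by
          rw [ENNReal.ofReal_toReal (lt_of_le_of_lt hn hd).ne]
      _ ≤ ENNReal.ofReal (qsCap k X I * (volume (h '' I)).toReal) :=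
          ENNReal.ofReal_le_ofReal hn'
      _ = ENNReal.ofReal (qsCap k X I) * volume (h '' I) := by
          rw [ENNReal.ofReal_mul (qsCap_nonneg k X I),
            ENNReal.ofReal_toReal hd.ne]

/-- Tree decomposition inequality for quasisymmetric capacities. -/
theorem qsCap_tree_decomposition (k : ℝ) (hk : 1 ≤ k)
    (I : Set ℝ) (u v : ℝ) (huv : u < v) (hI₁ : Ioo u v ⊆ I) (hI₂ : I ⊆ Icc u v)
    {ι : Type*} [Countable ι] (J : ι → Set ℝ)
    (hJ : ∀ j, (J j).OrdConnected ∧ J j ⊆ I)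
    (hdisj : Pairwise (Function.onFun Disjoint J))
    (X : Set ℝ) (hX : X ⊆ ⋃ j, J j) :
    qsCap k X I ≤ qsCap k (⋃ j, J j) I * ⨆ j, qsCap k X (J j) := by
  set C : ℝ := qsCap k (⋃ j, J j) I with hCdef
  set S : ℝ := ⨆ j, qsCap k X (J j) with hSdef
  have hC0 : 0 ≤ C := qsCap_nonneg _ _ _
  have hS0 : 0 ≤ S := Real.iSup_nonneg fun j => qsCap_nonneg _ _ _
  have hJIcc : ∀ j, J j ⊆ Icc u v := fun j => (hJ j).2.trans hI₂
  have hSbdd : BddAbove (range fun j => qsCap k X (J j)) :=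
    ⟨1, fun x hx => by obtain ⟨j, rfl⟩ := hx; exact qsCap_le_one k X (J j) (hJIcc j)⟩
  have hSle : ∀ j, qsCap k X (J j) ≤ S := fun j => le_ciSup hSbdd j
  refine Real.iSup_le (fun h => Real.iSup_le (fun hq => ?_) (mul_nonneg hC0 hS0))
    (mul_nonneg hC0 hS0)
  -- main estimate for a fixed quasisymmetric homeomorphism h
  have hcont : Continuous h := hq.1.continuous
  have hinj : Function.Injective h := hq.1.bijective.1
  have hd : volume (h '' I) < ⊤ := image_vol_lt_top hcont hI₂
  -- measurability and disjointness of the images h '' (J j)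
  have hmeas : ∀ j, MeasurableSet (h '' J j) := fun j =>
    (((hJ j).1.isPreconnected.image h hcont.continuousOn).ordConnected).measurableSet
  have hdisj' : Pairwise (Function.onFun Disjoint fun j => h '' J j) :=
    fun i j hij => disjoint_image_of_injective hinj (hdisj hij)
  have key : volume (h '' (X ∩ I)) ≤ ENNReal.ofReal (C * S) * volume (h '' I) := by
    have step1 : volume (h '' (X ∩ I)) ≤ ∑' j, volume (h '' (X ∩ J j)) := by
      refine le_trans (measure_mono ?_) (measure_iUnion_le _)
      intro y hy
      obtain ⟨x, hx, rfl⟩ := hy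
      obtain ⟨j, hj⟩ := mem_iUnion.mp (hX hx.1)
      exact mem_iUnion.mpr ⟨j, mem_image_of_mem h ⟨hx.1, hj⟩⟩
    have step2 : ∑' j, volume (h '' (X ∩ J j)) ≤
        ∑' j, ENNReal.ofReal S * volume (h '' J j) := by
      refine ENNReal.tsum_le_tsum fun j => ?_
      calc volume (h '' (X ∩ J j))
          ≤ ENNReal.ofReal (qsCap k X (J j)) * volume (h '' J j) :=
            competitor_bound hq X (J j) (hJIcc j)
        _ ≤ ENNReal.ofReal S * volume (h '' J j) :=
            mul_le_mul_left (ENNReal.ofReal_le_ofReal (hSle j)) _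
    have step3 : ∑' j, ENNReal.ofReal S * volume (h '' J j) =
        ENNReal.ofReal S * volume (h '' ⋃ j, J j) := by
      rw [ENNReal.tsum_mul_left, image_iUnion, measure_iUnion hdisj' hmeas]
    have step4 : volume (h '' ⋃ j, J j) ≤ ENNReal.ofReal C * volume (h '' I) := by
      have hsub : (⋃ j, J j) ⊆ I := iUnion_subset fun j => (hJ j).2
      have := competitor_bound hq (⋃ j, J j) I hI₂
      rwa [inter_eq_left.mpr hsub] at this
    calc volume (h '' (X ∩ I)) ≤ ENNReal.ofReal S * volume (h '' ⋃ j, J j) :=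
          le_trans (le_trans step1 step2) step3.le
      _ ≤ ENNReal.ofReal S * (ENNReal.ofReal C * volume (h '' I)) :=
          mul_le_mul_right step4 _
      _ = ENNReal.ofReal (C * S) * volume (h '' I) := by
          rw [ENNReal.ofReal_mul hC0, mul_comm (ENNReal.ofReal C)]
          ring
  -- convert to the real-valued ratio
  rcases eq_or_ne (volume (h '' I)).toReal 0 with h0 | h0
  · rw [h0, div_zero]; exact mul_nonneg hC0 hS0
  · have hdpos : 0 < (volume (h '' I)).toReal :=
      lt_of_le_of_ne ENNReal.toReal_nonneg (Ne.symm h0)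
    rw [div_le_iff₀ hdpos]
    have hfin : ENNReal.ofReal (C * S) * volume (h '' I) ≠ ⊤ :=
      ENNReal.mul_ne_top ENNReal.ofReal_ne_top hd.ne
    have := ENNReal.toReal_mono hfin key
    rwa [ENNReal.toReal_mul, ENNReal.toReal_ofReal (mul_nonneg hC0 hS0)] at this

end
end
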